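/- If S, D, M, N are positive integers with S ≤ N, D ≤ M, D divides M, and S² > 3M + 3M·ln D + 6SD + 6SD·ln(N/S), then there exists a table T : [N] × [N] → [M] such that for every set A ⊆ [M] with |A| = M/D and all sets B₁, B₂ ⊆ [N] with |B₁| ≥ S and |B₂| ≥ S, the number of pairs (i,j) ∈ B₁ × B₂ with T(i,j) ∈ A is at most 2·(|A|/M)·|B₁|·|B₂|. -/

import Mathlib

open Finset

/- ### Auxiliary lemmas ### -/

lemma log_choose {n k : ℕ} (hk : 0 < k) (hkn : k ≤ n) :
    Real.log (n.choose k) ≤ k * (1 + Real.log ((n : ℝ) / k)) := by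
  have hkpos : (0:ℝ) < k := by exact_mod_cast hk
  have hnpos : (0:ℝ) < n := by exact_mod_cast hk.trans_le hkn
  have h1 : (n.choose k : ℝ) ≤ (n:ℝ) ^ k / (Nat.factorial k : ℝ) := Nat.choose_le_pow_div k n
  have h2 : (k:ℝ) ^ k / (Nat.factorial k : ℝ) ≤ Real.exp k :=
    Real.pow_div_factorial_le_exp (x := (k:ℝ)) (by positivity) k
  have hfac : (0:ℝ) < (Nat.factorial k : ℝ) := by exact_mod_cast Nat.factorial_pos k
  have h3 : (n.choose k : ℝ) ≤ ((n:ℝ)/k) ^ k * Real.exp k := by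
    have : (n:ℝ)^k / (Nat.factorial k : ℝ)
        = ((n:ℝ)/k)^k * ((k:ℝ)^k / (Nat.factorial k : ℝ)) := by
      field_simp
      rw [div_pow, div_mul_cancel₀ _ (pow_ne_zero _ hkpos.ne')]
    rw [this] at h1
    refine h1.trans ?_
    gcongr
  calc Real.log (n.choose k) ≤ Real.log (((n:ℝ)/k) ^ k * Real.exp k) := by
        apply Real.log_le_log (by exact_mod_cast Nat.choose_pos hkn) h3
    _ = k * Real.log ((n:ℝ)/k) + k := by
        rw [Real.log_mul (by positivity) (Real.exp_ne_zero _), Real.log_pow, Real.log_exp]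
    _ = k * (1 + Real.log ((n:ℝ)/k)) := by ring

lemma mgf_sum {N M : ℕ} (P : Finset (Fin N × Fin N)) (A : Finset (Fin M)) :
    ∑ ω : Fin N × Fin N → Fin M, (2:ℝ) ^ ((P.filter (fun p => ω p ∈ A)).card)
      = ((M:ℝ) + A.card) ^ P.card * (M:ℝ) ^ (N * N - P.card) := by
  have key : ∀ ω : Fin N × Fin N → Fin M,
      (2:ℝ) ^ ((P.filter (fun p => ω p ∈ A)).card)
        = ∏ p : Fin N × Fin N, (if p ∈ P ∧ ω p ∈ A then (2:ℝ) else 1) := by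
    intro ω
    rw [Finset.prod_ite, Finset.prod_const, Finset.prod_const, one_pow, mul_one]
    congr 1
    rw [← Finset.filter_filter]
    congr 1
    simp
  simp_rw [key]
  rw [← Fintype.prod_sum (fun p (c : Fin M) => if p ∈ P ∧ c ∈ A then (2:ℝ) else 1)]
  have single : ∀ p : Fin N × Fin N,
      (∑ c : Fin M, if p ∈ P ∧ c ∈ A then (2:ℝ) else 1)
        = if p ∈ P then ((M:ℝ) + A.card) else (M:ℝ) := by
    intro p
    by_cases hp : p ∈ P
    · simp only [hp, true_and, if_true]
      have hA : A.card ≤ M := by simpa using A.card_le_univ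
      have hc : (filter (fun x => x ∉ A) univ) = Aᶜ := by ext; simp
      rw [Finset.sum_ite, Finset.sum_const, Finset.sum_const, hc, Finset.card_compl,
        Finset.filter_univ_mem]
      simp only [nsmul_eq_mul, mul_one, Fintype.card_fin]
      rw [Nat.cast_sub hA]
      ring
    · simp [hp, Finset.card_univ]
  simp_rw [single]
  rw [Finset.prod_ite, Finset.prod_const, Finset.prod_const]
  congr 1
  · simp
  · rw [Finset.filter_not, Finset.card_sdiff_of_subset (Finset.filter_subset _ _)]
    congr 1 <;> simp [Finset.card_univ]

lemma row_split {α β : Type*} [DecidableEq α] [DecidableEq β]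
    (Q : α × β → Prop) [DecidablePred Q] (B₁ : Finset α) (B₂ : Finset β) :
    ((B₁ ×ˢ B₂).filter Q).card = ∑ i ∈ B₁, (B₂.filter (fun j => Q (i, j))).card := by
  rw [Finset.card_filter, Finset.sum_product]
  simp only [Finset.card_filter]

lemma col_split {α β : Type*} [DecidableEq α] [DecidableEq β]
    (Q : α × β → Prop) [DecidablePred Q] (B₁ : Finset α) (B₂ : Finset β) :
    ((B₁ ×ˢ B₂).filter Q).card = ∑ j ∈ B₂, (B₁.filter (fun i => Q (i, j))).card := by
  rw [Finset.card_filter, Finset.sum_product_right]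
  simp only [Finset.card_filter]

lemma shrink_left {α β : Type*} [DecidableEq α] [DecidableEq β] (S : ℕ) (hS : 0 < S)
    (c : ℝ) (Q : α × β → Prop) [DecidablePred Q] (B₂ : Finset β) :
    ∀ n (B₁ : Finset α), B₁.card ≤ n → S ≤ B₁.card →
    (∀ C₁ ⊆ B₁, C₁.card = S → (((C₁ ×ˢ B₂).filter Q).card : ℝ) ≤ c * S) →
    (((B₁ ×ˢ B₂).filter Q).card : ℝ) ≤ c * B₁.card := by
  intro n
  induction n with
  | zero => intro B₁ hle hSc _; omega
  | succ n ih =>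
    intro B₁ hle hSc hsub
    rcases eq_or_lt_of_le hSc with heq | hlt
    · have := hsub B₁ (Finset.Subset.refl _) heq.symm
      rwa [heq] at this
    · have hb1 : 2 ≤ B₁.card := by omega
      have hne : B₁.Nonempty := Finset.card_pos.mp (by omega)
      set row : α → ℕ := fun i => (B₂.filter (fun j => Q (i, j))).card with hrow
      obtain ⟨i₀, hi₀, hmin⟩ := Finset.exists_min_image B₁ row hne
      have hsum : ((B₁ ×ˢ B₂).filter Q).card = ∑ i ∈ B₁, row i := row_split Q B₁ B₂
      have hbound : B₁.card * row i₀ ≤ ∑ i ∈ B₁, row i := by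
        calc B₁.card * row i₀ = ∑ _i ∈ B₁, row i₀ := by rw [Finset.sum_const, smul_eq_mul]
          _ ≤ ∑ i ∈ B₁, row i := Finset.sum_le_sum (fun i hi => hmin i hi)
      have herase_card : (B₁.erase i₀).card = B₁.card - 1 := Finset.card_erase_of_mem hi₀
      have hih : ((((B₁.erase i₀) ×ˢ B₂).filter Q).card : ℝ) ≤ c * (B₁.erase i₀).card := by
        apply ih _ (by omega) (by omega)
        intro C₁ hC₁ hcard
        exact hsub C₁ (hC₁.trans (Finset.erase_subset _ _)) hcard
      have hdiff : ((B₁ ×ˢ B₂).filter Q).card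
          = (((B₁.erase i₀) ×ˢ B₂).filter Q).card + row i₀ := by
        rw [hsum, row_split, ← Finset.sum_erase_add B₁ row hi₀]
      have h1 : (((B₁ ×ˢ B₂).filter Q).card : ℝ)
          = ((((B₁.erase i₀) ×ˢ B₂).filter Q).card : ℝ) + (row i₀ : ℝ) := by
        exact_mod_cast hdiff
      have h2 : (B₁.card : ℝ) * (row i₀ : ℝ) ≤ (((B₁ ×ˢ B₂).filter Q).card : ℝ) := by
        rw [hsum]; exact_mod_cast hbound
      have h3 : ((((B₁.erase i₀) ×ˢ B₂).filter Q).card : ℝ) ≤ c * ((B₁.card : ℝ) - 1) := by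
        rw [herase_card] at hih
        rwa [Nat.cast_sub (by omega), Nat.cast_one] at hih
      have hb : (2:ℝ) ≤ (B₁.card : ℝ) := by exact_mod_cast hb1
      set X : ℝ := (((B₁ ×ˢ B₂).filter Q).card : ℝ)
      set Y : ℝ := ((((B₁.erase i₀) ×ˢ B₂).filter Q).card : ℝ)
      set R : ℝ := (row i₀ : ℝ)
      set b : ℝ := (B₁.card : ℝ)
      have key : (b - 1) * X ≤ b * (c * (b - 1)) := by nlinarith [h1, h2, h3]
      have hbpos : 0 < b - 1 := by linarith
      nlinarith [key, hbpos]

lemma shrink_right {α β : Type*} [DecidableEq α] [DecidableEq β] (S : ℕ) (hS : 0 < S)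
    (c : ℝ) (Q : α × β → Prop) [DecidablePred Q] (B₁ : Finset α) :
    ∀ n (B₂ : Finset β), B₂.card ≤ n → S ≤ B₂.card →
    (∀ C₂ ⊆ B₂, C₂.card = S → (((B₁ ×ˢ C₂).filter Q).card : ℝ) ≤ c * S) →
    (((B₁ ×ˢ B₂).filter Q).card : ℝ) ≤ c * B₂.card := by
  have swap : ∀ (B : Finset α) (C : Finset β),
      ((B ×ˢ C).filter Q).card = ((C ×ˢ B).filter (fun p => Q (p.2, p.1))).card := by
    intro B C
    rw [row_split Q B C, col_split (fun p => Q (p.2, p.1)) C B]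
  intro n B₂ hn hSc hsub
  rw [swap]
  apply shrink_left S hS c _ _ n B₂ hn hSc
  intro C₂ hC₂ hcard
  rw [← swap]
  exact hsub C₂ hC₂ hcard

lemma shrink_both {α β : Type*} [DecidableEq α] [DecidableEq β] (S : ℕ) (hS : 0 < S)
    (ρ : ℝ) (Q : α × β → Prop) [DecidablePred Q] (B₁ : Finset α) (B₂ : Finset β)
    (h₁ : S ≤ B₁.card) (h₂ : S ≤ B₂.card)
    (hsub : ∀ C₁ ⊆ B₁, ∀ C₂ ⊆ B₂, C₁.card = S → C₂.card = S →
      (((C₁ ×ˢ C₂).filter Q).card : ℝ) ≤ ρ * S * S) :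
    (((B₁ ×ˢ B₂).filter Q).card : ℝ) ≤ ρ * B₁.card * B₂.card := by
  have step1 : ∀ C₁ ⊆ B₁, C₁.card = S →
      (((C₁ ×ˢ B₂).filter Q).card : ℝ) ≤ (ρ * B₂.card) * S := by
    intro C₁ hC₁ hcard
    have := shrink_right S hS (ρ * S) Q C₁ B₂.card B₂ le_rfl h₂
      (fun C₂ hC₂ hc => by
        have := hsub C₁ hC₁ C₂ hC₂ hcard hc
        linarith [this])
    linarith [this]
  have := shrink_left S hS (ρ * B₂.card) Q B₂ B₁.card B₁ le_rfl h₁ step1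
  linarith [this]

set_option maxHeartbeats 1000000 in
lemma numeric (N M S D a : ℕ) (hN : 0 < N) (hM : 0 < M) (hS : 0 < S) (hD : 0 < D)
    (hSN : S ≤ N) (ha : a * D = M) (ha0 : 0 < a)
    (h : (3 * M : ℝ) + 3 * M * Real.log D + 6 * S * D
          + 6 * S * D * Real.log ((N : ℝ) / S) < (S : ℝ) ^ 2) :
    ((M.choose a : ℝ)) * (N.choose S) * (N.choose S)
        * (((M:ℝ) + a) ^ (S*S) * (M:ℝ) ^ (N*N - S*S))
      < (2:ℝ) ^ ((2 * (S:ℝ) * S / D)) * (M:ℝ) ^ (N*N) := by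
  have haM : a ≤ M := by nlinarith
  have hMa : (a:ℝ) * D = M := by exact_mod_cast ha
  have hDpos : (0:ℝ) < D := by exact_mod_cast hD
  have hapos : (0:ℝ) < a := by exact_mod_cast ha0
  have hMpos : (0:ℝ) < M := by exact_mod_cast hM
  have hSpos : (0:ℝ) < S := by exact_mod_cast hS
  have hlhs : (0:ℝ) < ((M.choose a : ℝ)) * (N.choose S) * (N.choose S)
      * (((M:ℝ) + a) ^ (S*S) * (M:ℝ) ^ (N*N - S*S)) := by
    have hC1pos : (0:ℝ) < (M.choose a : ℝ) := by exact_mod_cast Nat.choose_pos haM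
    have hC2pos : (0:ℝ) < (N.choose S : ℝ) := by exact_mod_cast Nat.choose_pos hSN
    positivity
  have hrhs : (0:ℝ) < (2:ℝ) ^ ((2 * (S:ℝ) * S / D)) * (M:ℝ) ^ (N*N) := by positivity
  have hC1pos : (0:ℝ) < (M.choose a : ℝ) := by exact_mod_cast Nat.choose_pos haM
  have hC2pos : (0:ℝ) < (N.choose S : ℝ) := by exact_mod_cast Nat.choose_pos hSN
  have nP1 : ((M:ℝ) + a) ^ (S*S) ≠ 0 := (pow_pos (by linarith) _).ne'
  have nP2 : (M:ℝ) ^ (N*N - S*S) ≠ 0 := (pow_pos hMpos _).ne'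
  have nP3 : (M:ℝ) ^ (N*N) ≠ 0 := (pow_pos hMpos _).ne'
  have nR : (2:ℝ) ^ ((2 * (S:ℝ) * S / D)) ≠ 0 := (Real.rpow_pos_of_pos two_pos _).ne'
  rw [← Real.exp_log hlhs, ← Real.exp_log hrhs]
  apply Real.exp_lt_exp.mpr
  rw [Real.log_mul (by exact (mul_pos (mul_pos hC1pos hC2pos) hC2pos).ne') (mul_ne_zero nP1 nP2),
    Real.log_mul (mul_pos hC1pos hC2pos).ne' hC2pos.ne',
    Real.log_mul hC1pos.ne' hC2pos.ne',
    Real.log_mul nP1 nP2,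
    Real.log_mul nR nP3,
    Real.log_pow, Real.log_pow, Real.log_pow, Real.log_rpow (by norm_num)]
  have hL1 : Real.log (M.choose a) ≤ a * (1 + Real.log D) := by
    have := log_choose ha0 haM
    have hda : (M:ℝ) / a = D := by field_simp; linarith [hMa]
    rwa [hda] at this
  have hL2 : Real.log (N.choose S) ≤ S * (1 + Real.log ((N:ℝ)/S)) := log_choose hS hSN
  have hL3 : Real.log ((M:ℝ) + a) ≤ Real.log M + 1 / D := by
    have hsplit : (M:ℝ) + a = M * (1 + 1/D) := by field_simp; linarith [hMa]
    rw [hsplit, Real.log_mul (by positivity) (by positivity)]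
    have := Real.log_le_sub_one_of_pos (show (0:ℝ) < 1 + 1/D by positivity)
    have h2 : (1:ℝ) + 1/D - 1 = 1/D := by ring
    linarith [this]
  have hSSNN : S*S ≤ N*N := Nat.mul_le_mul hSN hSN
  have hcast : ((N*N - S*S : ℕ) : ℝ) = (N:ℝ)*N - (S:ℝ)*S := by
    push_cast [Nat.cast_sub hSSNN]; ring
  have hlog2 : (0.6931471803:ℝ) < Real.log 2 := Real.log_two_gt_d9
  have hlogM : (0:ℝ) ≤ Real.log M := Real.log_natCast_nonneg M
  have e1 : (a:ℝ)*D*Real.log D = M*Real.log D := by rw [hMa]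
  have hu : 3*((a:ℝ)*(1+Real.log D))*D + 3*(2*S*(1+Real.log ((N:ℝ)/S)))*D < (S:ℝ)^2 := by
    have heq : 3*((a:ℝ)*(1+Real.log D))*D + 3*(2*(S:ℝ)*(1+Real.log ((N:ℝ)/S)))*D
        = 3*(M:ℝ) + 3*M*Real.log D + 6*S*D + 6*S*D*Real.log ((N:ℝ)/S) := by
      linear_combination 3*hMa + 3*e1
    rw [heq]; exact h
  set u : ℝ := (a:ℝ)*(1+Real.log D) + 2*((S:ℝ)*(1+Real.log ((N:ℝ)/S))) with hu_def
  set w : ℝ := (S:ℝ)^2 / D with hw_def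
  have hwpos : (0:ℝ) < w := by rw [hw_def]; positivity
  have hu2 : 3*u < w := by
    rw [hw_def, lt_div_iff₀ hDpos]
    calc 3*u*(D:ℝ) = 3*((a:ℝ)*(1+Real.log D))*D + 3*(2*(S:ℝ)*(1+Real.log ((N:ℝ)/S)))*D := by
          rw [hu_def]; ring
      _ < (S:ℝ)^2 := hu
  have hfinal : u + w < (2*w) * Real.log 2 := by
    have hkey : (0:ℝ) ≤ (2*Real.log 2 - 4/3) * w :=
      mul_nonneg (by linarith [hlog2]) hwpos.le
    nlinarith [hu2, hkey]
  rw [hcast]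
  have hL3' : (S:ℝ)*S*Real.log ((M:ℝ)+a) ≤ (S:ℝ)*S*(Real.log M + 1/D) :=
    mul_le_mul_of_nonneg_left hL3 (by positivity)
  have hw2 : (S:ℝ)*S*(1/D) = w := by rw [hw_def]; ring
  have ht : (2 * (S:ℝ) * S / D) * Real.log 2 = (2*w)*Real.log 2 := by
    rw [hw_def]; ring
  push_cast
  clear_value u w
  linarith [hL1, hL2, hL3', hfinal, hw2, ht, hu_def]

set_option maxHeartbeats 2000000 in
lemma exists_good (N M S D : ℕ) (hN : 0 < N) (hM : 0 < M) (hS : 0 < S) (hD : 0 < D)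
    (hSN : S ≤ N) (hDM : D ≤ M) (hdvd : D ∣ M)
    (h : (3 * M : ℝ) + 3 * M * Real.log D + 6 * S * D
          + 6 * S * D * Real.log ((N : ℝ) / S) < (S : ℝ) ^ 2) :
    ∃ ω : Fin N × Fin N → Fin M,
      ∀ A : Finset (Fin M), A.card = M / D →
      ∀ B₁ B₂ : Finset (Fin N), B₁.card = S → B₂.card = S →
        (((B₁ ×ˢ B₂).filter (fun p => ω p ∈ A)).card : ℝ) ≤ 2 * (S:ℝ) * S / D := by
  classical
  set a : ℕ := M / D with ha_def
  have haD : a * D = M := Nat.div_mul_cancel hdvd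
  have ha0 : 0 < a := Nat.div_pos hDM hD
  have hDpos : (0:ℝ) < D := by exact_mod_cast hD
  have hMpos : (0:ℝ) < M := by exact_mod_cast hM
  have hSpos : (0:ℝ) < S := by exact_mod_cast hS
  set t : ℝ := 2 * (S:ℝ) * S / D with ht_def
  have h2t : (0:ℝ) < (2:ℝ) ^ t := Real.rpow_pos_of_pos two_pos t
  -- per-triple bound
  have per : ∀ (A : Finset (Fin M)) (B₁ B₂ : Finset (Fin N)),
      B₁.card = S → B₂.card = S →
      (((univ : Finset (Fin N × Fin N → Fin M)).filter
          (fun ω => t < (((B₁ ×ˢ B₂).filter (fun p => ω p ∈ A)).card : ℝ))).card : ℝ)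
        * (2:ℝ) ^ t
      ≤ ((M:ℝ) + A.card) ^ (S*S) * (M:ℝ) ^ (N*N - S*S) := by
    intro A B₁ B₂ hB₁ hB₂
    have hPcard : (B₁ ×ˢ B₂).card = S * S := by rw [Finset.card_product, hB₁, hB₂]
    set F := (univ : Finset (Fin N × Fin N → Fin M)).filter
        (fun ω => t < (((B₁ ×ˢ B₂).filter (fun p => ω p ∈ A)).card : ℝ)) with hF
    calc (F.card : ℝ) * (2:ℝ) ^ t = ∑ _ω ∈ F, (2:ℝ) ^ t := by
          rw [Finset.sum_const, nsmul_eq_mul]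
      _ ≤ ∑ ω ∈ F, (2:ℝ) ^ ((((B₁ ×ˢ B₂).filter (fun p => ω p ∈ A)).card : ℕ)) := by
          apply Finset.sum_le_sum
          intro ω hω
          rw [hF, Finset.mem_filter] at hω
          rw [← Real.rpow_natCast 2]
          exact Real.rpow_le_rpow_of_exponent_le (by norm_num) hω.2.le
      _ ≤ ∑ ω : Fin N × Fin N → Fin M,
            (2:ℝ) ^ ((((B₁ ×ˢ B₂).filter (fun p => ω p ∈ A)).card : ℕ)) := by
          apply Finset.sum_le_sum_of_subset_of_nonneg (Finset.filter_subset _ _)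
          intro ω _ _
          positivity
      _ = ((M:ℝ) + A.card) ^ (S*S) * (M:ℝ) ^ (N*N - S*S) := by
          rw [mgf_sum (B₁ ×ˢ B₂) A, hPcard]
  -- union bound
  set 𝒜 := (univ : Finset (Fin M)).powersetCard a with h𝒜
  set ℬ := (univ : Finset (Fin N)).powersetCard S with hℬ
  have hex : ∃ ω : Fin N × Fin N → Fin M, ∀ A ∈ 𝒜, ∀ B₁ ∈ ℬ, ∀ B₂ ∈ ℬ,
      (((B₁ ×ˢ B₂).filter (fun p => ω p ∈ A)).card : ℝ) ≤ t := by
    by_contra hc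
    push_neg at hc
    -- every ω is bad for some triple
    have hGuniv : (univ : Finset (Fin N × Fin N → Fin M))
        = univ.filter (fun ω => ∃ A ∈ 𝒜, ∃ B₁ ∈ ℬ, ∃ B₂ ∈ ℬ,
            t < (((B₁ ×ˢ B₂).filter (fun p => ω p ∈ A)).card : ℝ)) := by
      symm
      rw [Finset.filter_true_of_mem]
      intro ω _
      obtain ⟨A, hA, B₁, hB₁, B₂, hB₂, hlt⟩ := hc ω
      exact ⟨A, hA, B₁, hB₁, B₂, hB₂, hlt⟩
    -- card bound
    have hsub : (univ.filter (fun ω : Fin N × Fin N → Fin M => ∃ A ∈ 𝒜, ∃ B₁ ∈ ℬ, ∃ B₂ ∈ ℬ,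
            t < (((B₁ ×ˢ B₂).filter (fun p => ω p ∈ A)).card : ℝ)))
        ⊆ 𝒜.biUnion (fun A => ℬ.biUnion (fun B₁ => ℬ.biUnion (fun B₂ =>
            univ.filter (fun ω => t < (((B₁ ×ˢ B₂).filter (fun p => ω p ∈ A)).card : ℝ))))) := by
      intro ω hω
      rw [Finset.mem_filter] at hω
      obtain ⟨_, A, hA, B₁, hB₁, B₂, hB₂, hlt⟩ := hω
      simp only [Finset.mem_biUnion]
      exact ⟨A, hA, B₁, hB₁, B₂, hB₂, by simp [hlt]⟩
    have hcard1 : (univ : Finset (Fin N × Fin N → Fin M)).card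
        ≤ ∑ A ∈ 𝒜, ∑ B₁ ∈ ℬ, ∑ B₂ ∈ ℬ,
            (univ.filter (fun ω : Fin N × Fin N → Fin M =>
              t < (((B₁ ×ˢ B₂).filter (fun p => ω p ∈ A)).card : ℝ))).card := by
      calc (univ : Finset (Fin N × Fin N → Fin M)).card
          = (univ.filter (fun ω : Fin N × Fin N → Fin M => ∃ A ∈ 𝒜, ∃ B₁ ∈ ℬ, ∃ B₂ ∈ ℬ,
            t < (((B₁ ×ˢ B₂).filter (fun p => ω p ∈ A)).card : ℝ))).card :=
            congrArg Finset.card hGuniv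
        _ ≤ (𝒜.biUnion (fun A => ℬ.biUnion (fun B₁ => ℬ.biUnion (fun B₂ =>
              univ.filter (fun ω : Fin N × Fin N → Fin M =>
                t < (((B₁ ×ˢ B₂).filter (fun p => ω p ∈ A)).card : ℝ)))))).card :=
            Finset.card_le_card hsub
        _ ≤ ∑ A ∈ 𝒜, (ℬ.biUnion (fun B₁ => ℬ.biUnion (fun B₂ =>
              univ.filter (fun ω : Fin N × Fin N → Fin M =>
                t < (((B₁ ×ˢ B₂).filter (fun p => ω p ∈ A)).card : ℝ))))).card :=
            Finset.card_biUnion_le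
        _ ≤ ∑ A ∈ 𝒜, ∑ B₁ ∈ ℬ, (ℬ.biUnion (fun B₂ =>
              univ.filter (fun ω : Fin N × Fin N → Fin M =>
                t < (((B₁ ×ˢ B₂).filter (fun p => ω p ∈ A)).card : ℝ)))).card :=
            Finset.sum_le_sum (fun A _ => Finset.card_biUnion_le)
        _ ≤ ∑ A ∈ 𝒜, ∑ B₁ ∈ ℬ, ∑ B₂ ∈ ℬ,
            (univ.filter (fun ω : Fin N × Fin N → Fin M =>
              t < (((B₁ ×ˢ B₂).filter (fun p => ω p ∈ A)).card : ℝ))).card :=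
            Finset.sum_le_sum (fun A _ => Finset.sum_le_sum (fun B₁ _ => Finset.card_biUnion_le))
    -- real bound on the sum
    have hreal : ((univ : Finset (Fin N × Fin N → Fin M)).card : ℝ) * (2:ℝ) ^ t
        ≤ ((M.choose a : ℝ)) * (N.choose S) * (N.choose S)
          * (((M:ℝ) + a) ^ (S*S) * (M:ℝ) ^ (N*N - S*S)) := by
      have hc1 : ((univ : Finset (Fin N × Fin N → Fin M)).card : ℝ) * (2:ℝ) ^ t
          ≤ (∑ A ∈ 𝒜, ∑ B₁ ∈ ℬ, ∑ B₂ ∈ ℬ,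
              ((univ.filter (fun ω : Fin N × Fin N → Fin M =>
                t < (((B₁ ×ˢ B₂).filter (fun p => ω p ∈ A)).card : ℝ))).card : ℝ)) * (2:ℝ) ^ t := by
        apply mul_le_mul_of_nonneg_right _ h2t.le
        exact_mod_cast hcard1
      refine hc1.trans ?_
      rw [Finset.sum_mul]
      have hAcard : ∀ A ∈ 𝒜, (A.card : ℕ) = a := fun A hA =>
        (Finset.mem_powersetCard_univ.mp hA)
      calc ∑ A ∈ 𝒜, (∑ B₁ ∈ ℬ, ∑ B₂ ∈ ℬ,
              ((univ.filter (fun ω : Fin N × Fin N → Fin M =>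
                t < (((B₁ ×ˢ B₂).filter (fun p => ω p ∈ A)).card : ℝ))).card : ℝ)) * (2:ℝ) ^ t
          ≤ ∑ _A ∈ 𝒜, ∑ _B₁ ∈ ℬ, ∑ _B₂ ∈ ℬ,
              ((M:ℝ) + a) ^ (S*S) * (M:ℝ) ^ (N*N - S*S) := by
            apply Finset.sum_le_sum
            intro A hA
            rw [Finset.sum_mul]
            apply Finset.sum_le_sum
            intro B₁ hB₁
            rw [Finset.sum_mul]
            apply Finset.sum_le_sum
            intro B₂ hB₂
            have := per A B₁ B₂ (Finset.mem_powersetCard_univ.mp hB₁)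
              (Finset.mem_powersetCard_univ.mp hB₂)
            rw [hAcard A hA] at this
            exact this
        _ = ((M.choose a : ℝ)) * (N.choose S) * (N.choose S)
              * (((M:ℝ) + a) ^ (S*S) * (M:ℝ) ^ (N*N - S*S)) := by
            rw [Finset.sum_const, Finset.sum_const, Finset.sum_const]
            simp only [nsmul_eq_mul, h𝒜, hℬ, Finset.card_powersetCard, Finset.card_univ,
              Fintype.card_fin]
            ring
    -- contradiction with numeric
    have hnum := numeric N M S D a hN hM hS hD hSN haD ha0 h
    have hcardΩ : ((univ : Finset (Fin N × Fin N → Fin M)).card : ℝ) = (M:ℝ) ^ (N*N) := by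
      have hpc : Fintype.card (Fin N × Fin N) = N * N := by simp
      rw [Finset.card_univ, Fintype.card_fun, hpc, Fintype.card_fin]
      push_cast
      ring
    rw [hcardΩ] at hreal
    rw [ht_def] at hreal
    linarith [hreal, hnum]
  obtain ⟨ω, hω⟩ := hex
  refine ⟨ω, ?_⟩
  intro A hA B₁ B₂ hB₁ hB₂
  have := hω A (Finset.mem_powersetCard_univ.mpr hA) B₁ (Finset.mem_powersetCard_univ.mpr hB₁)
    B₂ (Finset.mem_powersetCard_univ.mpr hB₂)
  rwa [ht_def] at this

/-- existence of an (S,D)-balanced table. -/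
theorem stmt0 (N M S D : ℕ) (hN : 0 < N) (hM : 0 < M) (hS : 0 < S) (hD : 0 < D)
    (hSN : S ≤ N) (hDM : D ≤ M) (hdvd : D ∣ M)
    (h : (3 * M : ℝ) + 3 * M * Real.log D + 6 * S * D
          + 6 * S * D * Real.log ((N : ℝ) / S) < (S : ℝ) ^ 2) :
    ∃ T : Fin N → Fin N → Fin M,
      ∀ A : Finset (Fin M), A.card = M / D →
      ∀ B₁ B₂ : Finset (Fin N), S ≤ B₁.card → S ≤ B₂.card →
        (((B₁ ×ˢ B₂).filter (fun p => T p.1 p.2 ∈ A)).card : ℝ)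
          ≤ 2 * ((A.card : ℝ) / M) * ((B₁.card : ℝ) * B₂.card) := by
  classical
  obtain ⟨ω, hω⟩ := exists_good N M S D hN hM hS hD hSN hDM hdvd h
  refine ⟨fun i j => ω (i, j), ?_⟩
  intro A hA B₁ B₂ hB₁ hB₂
  have hMpos : (0:ℝ) < M := by exact_mod_cast hM
  have hDpos : (0:ℝ) < D := by exact_mod_cast hD
  have haD : (M / D) * D = M := Nat.div_mul_cancel hdvd
  have hratio : ((A.card : ℝ)) / M = 1 / D := by
    have hMa' : ((M / D : ℕ):ℝ) * D = M := by exact_mod_cast haD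
    rw [hA, div_eq_div_iff hMpos.ne' hDpos.ne', one_mul]
    exact hMa'
  have key : (((B₁ ×ˢ B₂).filter (fun p => ω p ∈ A)).card : ℝ)
      ≤ (2 / D) * B₁.card * B₂.card := by
    apply shrink_both S hS (2 / (D:ℝ)) (fun p => ω p ∈ A) B₁ B₂ hB₁ hB₂
    intro C₁ _ C₂ _ hc₁ hc₂
    have := hω A hA C₁ C₂ hc₁ hc₂
    calc (((C₁ ×ˢ C₂).filter (fun p => ω p ∈ A)).card : ℝ) ≤ 2 * (S:ℝ) * S / D := this
      _ = 2 / D * S * S := by ring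
  calc (((B₁ ×ˢ B₂).filter (fun p => ω (p.1, p.2) ∈ A)).card : ℝ)
      = (((B₁ ×ˢ B₂).filter (fun p => ω p ∈ A)).card : ℝ) := rfl
    _ ≤ (2 / D) * B₁.card * B₂.card := key
    _ = 2 * ((A.card : ℝ) / M) * ((B₁.card : ℝ) * B₂.card) := by
        rw [hratio]; ring
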